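/- Fix ℓ < m, positive integers s_ℓ,…,s_{m−1}, d_n = s_n + ⋯ + s_r for ℓ ≤ n ≤ m, and elements u_ℓ,…,u_{m−1} of a field K of characteristic p containing F_q(θ). Define y_i[ℓ n] for ℓ ≤ n ≤ m by y_i[ℓ ℓ] = 1/L_i^{d_ℓ}, y_0[ℓ n] = 0 for n > ℓ, and the recursion L_{i+1}^{d_m} y_{i+1}[ℓ m] = L_i^{d_m} Σ_{n=ℓ}^{m−1} y_i[ℓ n] (−1)^{m−n} ∏_{e=n}^{m−1} u_e^{q^i} + L_i^{d_m} y_i[ℓ m]. Then y_i[ℓ m] = (−1)^{m−ℓ} Σ_{0 ≤ i_ℓ ≤ ⋯ ≤ i_{m−1} < i} u_ℓ^{q^{i_ℓ}} ⋯ u_{m−1}^{q^{i_{m−1}}} / (L_{i_ℓ}^{s_ℓ} ⋯ L_{i_{m−1}}^{s_{m−1}} L_i^{d_m}) for all i ≥ 0. -/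

import Mathlib

open scoped Classical

noncomputable def Tm {K : Type*} [Field K] (g : ℕ → ℕ → K) (c i : ℕ) : K :=
  ∑ f ∈ Finset.univ.filter (fun f : Fin c → Fin i => Monotone f),
    ∏ j : Fin c, g (j : ℕ) ((f j : ℕ))

lemma Tm_zero {K : Type*} [Field K] (g : ℕ → ℕ → K) (i : ℕ) : Tm g 0 i = 1 := by
  classical
  unfold Tm
  have h : (Finset.univ.filter (fun f : Fin 0 → Fin i => Monotone f)) = Finset.univ := by
    apply Finset.filter_true_of_mem
    intro f _ a b _
    exact a.elim0
  rw [h]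
  simp

lemma Tm_pos_zero {K : Type*} [Field K] (g : ℕ → ℕ → K) {c : ℕ} (hc : 0 < c) :
    Tm g c 0 = 0 := by
  classical
  unfold Tm
  have : IsEmpty (Fin c → Fin 0) :=
    ⟨fun f => (f ⟨0, hc⟩).elim0⟩
  rw [Finset.univ_eq_empty]
  simp

lemma monotone_snoc_last {c i : ℕ} {h : Fin c → Fin (i + 1)} (hh : Monotone h) :
    Monotone (Fin.snoc h (Fin.last i) : Fin (c + 1) → Fin (i + 1)) := by
  intro a b hab
  rcases Fin.eq_castSucc_or_eq_last b with ⟨b', rfl⟩ | rfl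
  · rcases Fin.eq_castSucc_or_eq_last a with ⟨a', rfl⟩ | rfl
    · simpa [Fin.snoc_castSucc] using hh (Fin.castSucc_le_castSucc_iff.mp hab)
    · have : b'.castSucc = Fin.last c := le_antisymm (Fin.le_last _) hab
      rw [this]
  · simp [Fin.snoc_last, Fin.le_last]

lemma Tm_succ {K : Type*} [Field K] (g : ℕ → ℕ → K) :
    ∀ c i, Tm g c (i + 1) =
      ∑ t ∈ Finset.range (c + 1), Tm g t i * ∏ j ∈ Finset.Ico t c, g j i := by
  classical
  intro c
  induction c with
  | zero => intro i; simp [Tm_zero]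
  | succ c ih =>
    intro i
    have hsplit :
        Tm g (c + 1) (i + 1) =
          (∑ f ∈ (Finset.univ.filter
              (fun f : Fin (c + 1) → Fin (i + 1) => Monotone f)).filter
              (fun f => f (Fin.last c) = Fin.last i),
            ∏ j : Fin (c + 1), g (j : ℕ) ((f j : ℕ)))
          + (∑ f ∈ (Finset.univ.filter
              (fun f : Fin (c + 1) → Fin (i + 1) => Monotone f)).filter
              (fun f => ¬ f (Fin.last c) = Fin.last i),
            ∏ j : Fin (c + 1), g (j : ℕ) ((f j : ℕ))) := by
      rw [Tm, Finset.sum_filter_add_sum_filter_not]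
    -- part 1: f (last) = last  ↔ monotone Fin c → Fin (i+1)
    have h1 :
        (∑ f ∈ (Finset.univ.filter
            (fun f : Fin (c + 1) → Fin (i + 1) => Monotone f)).filter
            (fun f => f (Fin.last c) = Fin.last i),
          ∏ j : Fin (c + 1), g (j : ℕ) ((f j : ℕ)))
        = Tm g c (i + 1) * g c i := by
      rw [Tm, Finset.sum_mul]
      refine Finset.sum_bij'
        (fun f _ => Fin.init f)
        (fun h _ => Fin.snoc h (Fin.last i)) ?_ ?_ ?_ ?_ ?_
      · intro f hf
        simp only [Finset.mem_filter, Finset.mem_univ, true_and] at hf ⊢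
        exact fun a b hab => hf.1 (Fin.castSucc_le_castSucc_iff.mpr hab)
      · intro h hh
        simp only [Finset.mem_filter, Finset.mem_univ, true_and] at hh ⊢
        exact ⟨monotone_snoc_last hh, Fin.snoc_last _ _⟩
      · intro f hf
        simp only [Finset.mem_filter, Finset.mem_univ, true_and] at hf
        conv_rhs => rw [← Fin.snoc_init_self f]
        simp only [hf.2]
      · intro h hh
        exact Fin.init_snoc _ _
      · intro f hf
        simp only [Finset.mem_filter, Finset.mem_univ, true_and] at hf
        rw [Fin.prod_univ_castSucc (fun j => g (j : ℕ) ((f j : ℕ)))]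
        have hv : (f (Fin.last c) : ℕ) = i := by rw [hf.2]; rfl
        simp [Fin.init, Fin.coe_castSucc, Fin.val_last, hv]
    -- part 2: f (last) ≠ last ↔ monotone Fin (c+1) → Fin i
    have h2 :
        (∑ f ∈ (Finset.univ.filter
            (fun f : Fin (c + 1) → Fin (i + 1) => Monotone f)).filter
            (fun f => ¬ f (Fin.last c) = Fin.last i),
          ∏ j : Fin (c + 1), g (j : ℕ) ((f j : ℕ)))
        = Tm g (c + 1) i := by
      rw [Tm]
      refine Finset.sum_bij'
        (fun f hf => fun j => (⟨(f j : ℕ), by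
          simp only [Finset.mem_filter, Finset.mem_univ, true_and] at hf
          have h1 : (f j : ℕ) ≤ (f (Fin.last c) : ℕ) := hf.1 (Fin.le_last j)
          have h2 : (f (Fin.last c) : ℕ) < i + 1 := (f (Fin.last c)).isLt
          have h3 : (f (Fin.last c) : ℕ) ≠ i := by
            intro h
            exact hf.2 (Fin.ext (by simpa [Fin.val_last] using h))
          omega⟩ : Fin i))
        (fun h _ => fun j => (h j).castSucc) ?_ ?_ ?_ ?_ ?_
      · intro f hf
        simp only [Finset.mem_filter, Finset.mem_univ, true_and] at hf ⊢
        intro a b hab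
        exact hf.1 hab
      · intro h hh
        simp only [Finset.mem_filter, Finset.mem_univ, true_and] at hh ⊢
        refine ⟨fun a b hab => Fin.castSucc_le_castSucc_iff.mpr (hh hab), ?_⟩
        exact Fin.ne_of_lt (Fin.castSucc_lt_last _)
      · intro f hf
        funext j
        exact Fin.ext (by simp)
      · intro h hh
        funext j
        exact Fin.ext (by simp)
      · intro f hf
        exact Finset.prod_congr rfl (fun j _ => rfl)
    rw [hsplit, h1, h2, ih i]
    conv_rhs => rw [Finset.sum_range_succ]
    rw [Finset.sum_mul]
    congr 1
    · refine Finset.sum_congr rfl (fun t ht => ?_)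
      rw [Finset.mem_range] at ht
      rw [Finset.prod_Ico_succ_top (show t ≤ c by omega)]
      ring
    · simp

noncomputable def gdef {K : Type*} [Field K] (q : ℕ) (L : ℕ → K) (s : ℕ → ℕ) (u : ℕ → K)
    (ℓ : ℕ) : ℕ → ℕ → K :=
  fun j a => u (ℓ + j) ^ q ^ a * (L a ^ s (ℓ + j))⁻¹

lemma stmt9_aux {K : Type*} [Field K] (q : ℕ)
    (L : ℕ → K) (hL : ∀ i, L i ≠ 0)
    (r ℓ m : ℕ) (hmr : m ≤ r)
    (s : ℕ → ℕ) (d : ℕ → ℕ)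
    (hd : ∀ n, d n = ∑ e ∈ Finset.Icc n r, s e)
    (u : ℕ → K) (y : ℕ → ℕ → K)
    (hdiag : ∀ i, y i ℓ = (L i ^ d ℓ)⁻¹)
    (hy0 : ∀ n, ℓ < n → n ≤ m → y 0 n = 0)
    (hyrec : ∀ n, ℓ < n → n ≤ m → ∀ i,
      L (i + 1) ^ d n * y (i + 1) n =
        L i ^ d n * (∑ k ∈ Finset.Ico ℓ n,
            y i k * (-1 : K) ^ (n - k) * ∏ e ∈ Finset.Ico k n, u e ^ q ^ i)
          + L i ^ d n * y i n) :
    ∀ n, ℓ ≤ n → n ≤ m → ∀ i,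
      y i n = (-1 : K) ^ (n - ℓ) * Tm (gdef q L s u ℓ) (n - ℓ) i * (L i ^ d n)⁻¹ := by
  intro n
  induction n using Nat.strong_induction_on with
  | _ n IH =>
    intro hln hnm i
    rcases eq_or_lt_of_le hln with rfl | hlt
    · simp [hdiag i, Tm_zero]
    · induction i with
      | zero =>
        rw [hy0 n hlt hnm, Tm_pos_zero _ (by omega : 0 < n - ℓ)]
        ring
      | succ i ihi =>
        have hne0 : L i ^ d n ≠ 0 := pow_ne_zero _ (hL _)
        have hne1 : L (i + 1) ^ d n ≠ 0 := pow_ne_zero _ (hL _)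
        -- per-term rewrite of the recursion sum
        have hterm : ∀ k ∈ Finset.Ico ℓ n,
            y i k * (-1 : K) ^ (n - k) * ∏ e ∈ Finset.Ico k n, u e ^ q ^ i
            = (-1 : K) ^ (n - ℓ) *
                (Tm (gdef q L s u ℓ) (k - ℓ) i *
                  ∏ j ∈ Finset.Ico (k - ℓ) (n - ℓ), gdef q L s u ℓ j i) *
                (L i ^ d n)⁻¹ := by
          intro k hk
          rw [Finset.mem_Ico] at hk
          have hy := IH k (by omega) hk.1 (by omega) i
          have h1 : d k = (∑ e ∈ Finset.Ico k n, s e) + d n := by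
            rw [hd k, hd n, ← Finset.Ico_add_one_right_eq_Icc, ← Finset.Ico_add_one_right_eq_Icc,
              Finset.sum_Ico_consecutive s hk.2.le (by omega : n ≤ r + 1)]
          have hdk : (L i : K) ^ d k = (∏ e ∈ Finset.Ico k n, L i ^ s e) * L i ^ d n := by
            rw [h1, pow_add, Finset.prod_pow_eq_pow_sum]
          have hreidx : ∏ j ∈ Finset.Ico (k - ℓ) (n - ℓ), gdef q L s u ℓ j i
              = ∏ e ∈ Finset.Ico k n, (u e ^ q ^ i * (L i ^ s e)⁻¹) := by
            rw [Finset.prod_Ico_eq_prod_range, Finset.prod_Ico_eq_prod_range]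
            have he : (n - ℓ) - (k - ℓ) = n - k := by omega
            rw [he]
            refine Finset.prod_congr rfl fun j _ => ?_
            have he2 : ℓ + (k - ℓ + j) = k + j := by omega
            rw [gdef, he2]
          have hsgn : ((-1 : K)) ^ (k - ℓ) * (-1 : K) ^ (n - k) = (-1 : K) ^ (n - ℓ) := by
            rw [← pow_add]
            congr 1
            omega
          rw [hy, hreidx, hdk, Finset.prod_mul_distrib, ← hsgn, mul_inv,
            Finset.prod_inv_distrib]
          ring
        have hsum :
            (∑ k ∈ Finset.Ico ℓ n,
              y i k * (-1 : K) ^ (n - k) * ∏ e ∈ Finset.Ico k n, u e ^ q ^ i)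
            = (-1 : K) ^ (n - ℓ) *
                (∑ t ∈ Finset.range (n - ℓ),
                  Tm (gdef q L s u ℓ) t i *
                    ∏ j ∈ Finset.Ico t (n - ℓ), gdef q L s u ℓ j i) *
                (L i ^ d n)⁻¹ := by
          rw [Finset.sum_congr rfl hterm, Finset.sum_Ico_eq_sum_range]
          simp only [Nat.add_sub_cancel_left]
          rw [← Finset.sum_mul, ← Finset.mul_sum]
        have hTm : Tm (gdef q L s u ℓ) (n - ℓ) (i + 1)
            = (∑ t ∈ Finset.range (n - ℓ),
                Tm (gdef q L s u ℓ) t i *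
                  ∏ j ∈ Finset.Ico t (n - ℓ), gdef q L s u ℓ j i)
              + Tm (gdef q L s u ℓ) (n - ℓ) i := by
          rw [Tm_succ, Finset.sum_range_succ]
          simp
        have hrec := hyrec n hlt hnm i
        rw [hsum, ihi] at hrec
        rw [hTm]
        field_simp
        rw [mul_comm (y (i + 1) n) (L (i + 1) ^ d n), hrec]
        field_simp


/-- explicit solution of the recursion for the lower-right-corner entries
`y_i[ℓ m]` of the blocks of the logarithm coefficients of the `t`-module `G`:
`y_i[ℓ m] = (−1)^(m−ℓ) Σ_{0 ≤ i_ℓ ≤ ⋯ ≤ i_{m−1} < i}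
  u_ℓ^{q^{i_ℓ}} ⋯ u_{m−1}^{q^{i_{m−1}}} / (L_{i_ℓ}^{s_ℓ} ⋯ L_{i_{m−1}}^{s_{m−1}} L_i^{d_m})`. -/
theorem stmt9 {K : Type*} [Field K] (p q : ℕ) (hp : p.Prime) [CharP K p]
    (hq : ∃ e : ℕ, 0 < e ∧ q = p ^ e)
    (th : K) (L : ℕ → K) (hL0 : L 0 = 1)
    (hLrec : ∀ i, L (i + 1) = (th - th ^ q ^ (i + 1)) * L i) (hL : ∀ i, L i ≠ 0)
    (r ℓ m : ℕ) (hlm : ℓ < m) (hmr : m ≤ r)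
    (s : ℕ → ℕ) (hs : ∀ n, 0 < s n) (d : ℕ → ℕ)
    (hd : ∀ n, d n = ∑ e ∈ Finset.Icc n r, s e)
    (u : ℕ → K)
    (y : ℕ → ℕ → K)
    (hdiag : ∀ i, y i ℓ = (L i ^ d ℓ)⁻¹)
    (hy0 : ∀ n, ℓ < n → n ≤ m → y 0 n = 0)
    (hyrec : ∀ n, ℓ < n → n ≤ m → ∀ i,
      L (i + 1) ^ d n * y (i + 1) n =
        L i ^ d n * (∑ k ∈ Finset.Ico ℓ n,
            y i k * (-1 : K) ^ (n - k) * ∏ e ∈ Finset.Ico k n, u e ^ q ^ i)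
          + L i ^ d n * y i n) :
    ∀ i, y i m = (-1 : K) ^ (m - ℓ) *
      (∑ f ∈ Finset.univ.filter (fun f : Fin (m - ℓ) → Fin i => Monotone f),
        ∏ j : Fin (m - ℓ),
          u (ℓ + (j : ℕ)) ^ q ^ ((f j : ℕ)) * (L ((f j : ℕ)) ^ s (ℓ + (j : ℕ)))⁻¹) *
      (L i ^ d m)⁻¹ := by
  intro i
  have h := stmt9_aux q L hL r ℓ m hmr s d hd u y hdiag hy0 hyrec m hlm.le le_rfl i
  rw [h]
  rfl
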